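/- Let n, k ≥ 2. For every finite partition of ℕ there exist monochromatic natural numbers x₁,…,xₙ, y₁,…,y_k, with x₁,…,xₙ pairwise distinct and y₁,…,y_k pairwise distinct, such that ∑_{i=1}^n x_i = ∏_{j=1}^k y_j. -/

import Mathlib

/- `ℕ+` plays the role of the paper's `ℕ` (the positive integers). -/

open Filter Set

attribute [local instance] Ultrafilter.mul Ultrafilter.semigroup
  Ultrafilter.add Ultrafilter.addSemigroup

namespace PrSumProd

/-- The set of values expressible as a sum of `n` pairwise distinct elements of `A`. -/
def sumN (n : ℕ) (A : Set ℕ+) : Set ℕ+ :=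
  {s | ∃ f : Fin n → ℕ+, Function.Injective f ∧ (∀ i, f i ∈ A) ∧ (s : ℕ) = ∑ i, (f i : ℕ)}

lemma mem_mul' {U V : Ultrafilter ℕ+} {s : Set ℕ+} :
    s ∈ U * V ↔ {a : ℕ+ | {b : ℕ+ | a * b ∈ s} ∈ V} ∈ U :=
  Iff.rfl

lemma mem_add' {U V : Ultrafilter ℕ+} {s : Set ℕ+} :
    s ∈ U + V ↔ {a : ℕ+ | {b : ℕ+ | a + b ∈ s} ∈ V} ∈ U :=
  Iff.rfl

lemma pure_mul_pure (a b : ℕ+) :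
    (pure a : Ultrafilter ℕ+) * pure b = pure (a * b) := by
  apply Ultrafilter.coe_injective
  apply Filter.ext
  intro s
  simp only [Ultrafilter.mem_coe, mem_mul', Ultrafilter.mem_pure]
  rfl

lemma pure_add_pure (a b : ℕ+) :
    (pure a : Ultrafilter ℕ+) + pure b = pure (a + b) := by
  apply Ultrafilter.coe_injective
  apply Filter.ext
  intro s
  simp only [Ultrafilter.mem_coe, mem_add', Ultrafilter.mem_pure]
  rfl

/-- The key collection of ultrafilters: those all of whose members have a large
`n`-fold (distinct) sumset. -/
def Gam (n : ℕ) : Set (Ultrafilter ℕ+) :=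
  {q | ∀ A : Set ℕ+, A ∈ q → sumN n A ∈ q}

lemma compl_mem_of_finite {q : Ultrafilter ℕ+} (hq : ∀ a : ℕ+, q ≠ pure a)
    {s : Set ℕ+} (hs : s.Finite) : sᶜ ∈ q := by
  rw [Ultrafilter.compl_mem_iff_notMem]
  intro h
  obtain ⟨a, -, ha⟩ := Ultrafilter.eq_pure_of_finite_mem hs h
  exact hq a ha

lemma add_idem_ne_pure {p : Ultrafilter ℕ+} (hp : p + p = p) (a : ℕ+) : p ≠ pure a := by
  intro h
  have h2 : (pure (a + a) : Ultrafilter ℕ+) = pure a := by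
    rw [← pure_add_pure, ← h, hp]
  have h3 : a + a = a := Ultrafilter.pure_injective h2
  have h4 : ((a + a : ℕ+) : ℕ) = (a : ℕ) := congrArg _ h3
  rw [PNat.add_coe] at h4
  have := a.pos
  omega

/-- Every additive idempotent ultrafilter lies in `Gam n` (for `n ≥ 1`). -/
lemma add_idem_mem_Gam {p : Ultrafilter ℕ+} (hp : p + p = p) :
    ∀ n : ℕ, 1 ≤ n → ∀ A : Set ℕ+, A ∈ p → sumN n A ∈ p := by
  intro n
  induction n with
  | zero => intro h; omega
  | succ m ih =>
    intro _ A hA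
    rcases Nat.eq_zero_or_pos m with hm | hm
    · subst hm
      refine mem_of_superset hA ?_
      intro a ha
      refine ⟨fun _ => a, fun i j _ => Fin.ext (by omega), fun _ => ha, ?_⟩
      simp
    · -- inductive step
      have key : sumN (m + 1) A ∈ p + p := by
        rw [mem_add']
        refine mem_of_superset hA ?_
        intro a ha
        -- the elements of `A` above `a`
        have hIic : (Set.Iic a)ᶜ ∈ p :=
          compl_mem_of_finite (add_idem_ne_pure hp) (Set.finite_Iic a)
        have h1 : A ∩ (Set.Iic a)ᶜ ∈ p := inter_mem hA hIic
        have h2 : sumN m (A ∩ (Set.Iic a)ᶜ) ∈ p := ih hm _ h1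
        refine mem_of_superset h2 ?_
        rintro b ⟨f, finj, fmem, fsum⟩
        refine ⟨Fin.cons a f, ?_, ?_, ?_⟩
        · refine Fin.cons_injective_of_injective ?_ finj
          rintro ⟨i, hi⟩
          exact (fmem i).2 hi.le
        · intro i
          cases i using Fin.cases with
          | zero => simpa using ha
          | succ j => simpa using (fmem j).1
        · have hcomp : ((fun z : ℕ+ => (z : ℕ)) ∘ (Fin.cons a f : Fin (m + 1) → ℕ+))
              = Fin.cons ((a : ℕ)) (fun i => ((f i : ℕ))) :=
            Fin.comp_cons (fun z : ℕ+ => (z : ℕ)) a f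
          calc ((a + b : ℕ+) : ℕ) = (a : ℕ) + (b : ℕ) := PNat.add_coe a b
            _ = (a : ℕ) + ∑ i, ((f i : ℕ)) := by rw [fsum]
            _ = ∑ i, Fin.cons ((a : ℕ)) (fun i => ((f i : ℕ))) i := (Fin.sum_cons _ _).symm
            _ = ∑ i, ((fun z : ℕ+ => (z : ℕ)) ∘ (Fin.cons a f : Fin (m + 1) → ℕ+)) i := by
                  rw [hcomp]
            _ = ∑ i, (((Fin.cons a f : Fin (m + 1) → ℕ+) i : ℕ+) : ℕ) :=
                  Finset.sum_congr rfl fun i _ => rfl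
      rwa [hp] at key

/-- `Gam n` is closed under the (ultrafilter extension of) multiplication. -/
lemma Gam_mul {n : ℕ} {q q' : Ultrafilter ℕ+} (hq : q ∈ Gam n) (hq' : q' ∈ Gam n) :
    q * q' ∈ Gam n := by
  intro A hA
  rw [mem_mul'] at hA ⊢
  refine mem_of_superset hA ?_
  intro a ha
  have h2 : sumN n {b : ℕ+ | a * b ∈ A} ∈ q' := hq' _ ha
  refine mem_of_superset h2 ?_
  rintro b ⟨f, finj, fmem, fsum⟩
  refine ⟨fun i => a * f i, ?_, fun i => fmem i, ?_⟩
  · intro i j h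
    exact finj (mul_left_cancel h)
  · calc ((a * b : ℕ+) : ℕ) = (a : ℕ) * (b : ℕ) := PNat.mul_coe a b
      _ = (a : ℕ) * ∑ i, ((f i : ℕ)) := by rw [fsum]
      _ = ∑ i, (a : ℕ) * ((f i : ℕ)) := Finset.mul_sum _ _ _
      _ = ∑ i, ((a * f i : ℕ+) : ℕ) := by
            refine Finset.sum_congr rfl fun i _ => ?_
            rw [PNat.mul_coe]

lemma Gam_closed (n : ℕ) : IsClosed (Gam n) := by
  have hEq : Gam n = ⋂ A : Set ℕ+,
      ({q : Ultrafilter ℕ+ | A ∈ q}ᶜ ∪ {q : Ultrafilter ℕ+ | sumN n A ∈ q}) := by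
    ext q
    simp only [Set.mem_iInter, Set.mem_union, Set.mem_compl_iff, Set.mem_setOf_eq]
    constructor
    · intro h A
      by_cases hA : A ∈ q
      · exact Or.inr (h A hA)
      · exact Or.inl hA
    · intro h A hA
      rcases h A with h' | h'
      · exact absurd hA h'
      · exact h'
  rw [hEq]
  exact isClosed_iInter fun A =>
    IsClosed.union (isClosed_compl_iff.mpr (ultrafilter_isOpen_basic A))
      (ultrafilter_isClosed_basic _)

lemma Gam_nonempty (n : ℕ) (hn : 1 ≤ n) : (Gam n).Nonempty := by
  haveI : Nonempty (Ultrafilter ℕ+) := ⟨pure 1⟩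
  obtain ⟨p, hp⟩ := exists_idempotent_of_compact_t2_of_continuous_add_left
    (M := Ultrafilter ℕ+) Ultrafilter.continuous_add_left
  exact ⟨p, fun A hA => add_idem_mem_Gam hp n hn A hA⟩

/-- There is a multiplicative idempotent ultrafilter in `Gam n`. -/
lemma exists_mul_idem_in_Gam (n : ℕ) (hn : 1 ≤ n) :
    ∃ q ∈ Gam n, q * q = q :=
  exists_idempotent_in_compact_subsemigroup Ultrafilter.continuous_mul_left (Gam n)
    (Gam_nonempty n hn) ((Gam_closed n).isCompact) (fun _ hx _ hy => Gam_mul hx hy)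

lemma mul_idem_ne_pure {n : ℕ} (hn : 2 ≤ n) {q : Ultrafilter ℕ+}
    (hq : q ∈ Gam n) (hidem : q * q = q) (a : ℕ+) : q ≠ pure a := by
  intro h
  have h2 : (pure (a * a) : Ultrafilter ℕ+) = pure a := by
    rw [← pure_mul_pure, ← h, hidem]
  have haa : a * a = a := Ultrafilter.pure_injective h2
  have ha1 : a = 1 := mul_eq_left.mp haa
  subst ha1
  have h1 : ({1} : Set ℕ+) ∈ q := by
    rw [h]
    exact Ultrafilter.mem_pure.mpr rfl
  have h3 : sumN n {1} ∈ q := hq _ h1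
  obtain ⟨s, f, finj, fmem, -⟩ := Ultrafilter.nonempty_of_mem h3
  have e0 : f ⟨0, by omega⟩ = 1 := fmem _
  have e1 : f ⟨1, by omega⟩ = 1 := fmem _
  have := finj (e0.trans e1.symm)
  have h01 : (0 : ℕ) = 1 := by
    simpa [Fin.mk.injEq] using this
  exact absurd h01 (by omega)

/-- Hindman-style finite multiplicative tower inside a member of a multiplicative
idempotent ultrafilter. -/
lemma tower {q : Ultrafilter ℕ+} (hidem : q * q = q) (hnp : ∀ a : ℕ+, q ≠ pure a) :
    ∀ (k : ℕ) (D : Set ℕ+), D ∈ q → ∀ N : ℕ+, ∃ y : Fin (k + 1) → ℕ+,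
      Function.Injective y ∧ (∀ j, y j ∈ D) ∧ (∀ j, N < y j) ∧ (∏ j, y j) ∈ D := by
  intro k
  induction k with
  | zero =>
    intro D hD N
    have h1 : D ∩ (Set.Iic N)ᶜ ∈ q :=
      inter_mem hD (compl_mem_of_finite hnp (Set.finite_Iic N))
    obtain ⟨a, haD, haN⟩ := Ultrafilter.nonempty_of_mem h1
    refine ⟨fun _ => a, fun i j _ => Fin.ext (by omega), fun _ => haD,
      fun _ => not_le.mp (fun hle => haN hle), ?_⟩
    simpa using haD
  | succ m ih =>
    intro D hD N
    have hDq : D ∈ q * q := by rw [hidem]; exact hD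
    rw [mem_mul'] at hDq
    have hE : (D ∩ {a : ℕ+ | {b : ℕ+ | a * b ∈ D} ∈ q}) ∩ (Set.Iic N)ᶜ ∈ q :=
      inter_mem (inter_mem hD hDq) (compl_mem_of_finite hnp (Set.finite_Iic N))
    obtain ⟨a, ⟨⟨haD, haQ⟩, haN⟩⟩ := Ultrafilter.nonempty_of_mem hE
    have hD' : D ∩ {b : ℕ+ | a * b ∈ D} ∈ q := inter_mem hD haQ
    obtain ⟨y', hinj', hmem', hbound', hprod'⟩ := ih _ hD' a
    refine ⟨Fin.cons a y', ?_, ?_, ?_, ?_⟩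
    · refine Fin.cons_injective_of_injective ?_ hinj'
      rintro ⟨j, rfl⟩
      exact lt_irrefl _ (hbound' j)
    · intro j
      cases j using Fin.cases with
      | zero => simpa using haD
      | succ i => simpa using (hmem' i).1
    · intro j
      have h1 : N < a := not_le.mp (fun hle => haN hle)
      cases j using Fin.cases with
      | zero => simpa using h1
      | succ i =>
        have h2 : a < y' i := hbound' i
        simpa using h1.trans h2
    · rw [Fin.prod_cons]
      have : (∏ j, y' j) ∈ {b : ℕ+ | a * b ∈ D} := hprod'.2
      exact this

end PrSumProd

open PrSumProd in
/-- For `n, k ≥ 2`, every finite coloring of `ℕ` admits monochromatic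
`x₁,…,xₙ, y₁,…,y_k`, with the `xᵢ` pairwise distinct and the `yⱼ` pairwise
distinct, such that `x₁ + … + xₙ = y₁ ⋯ y_k`. -/
theorem pr_sum_eq_product {n k : ℕ} (hn : 2 ≤ n) (hk : 2 ≤ k) :
    ∀ (r : ℕ) (C : ℕ+ → Fin r), ∃ (x : Fin n → ℕ+) (y : Fin k → ℕ+),
      (∀ i j, C (x i) = C (x j)) ∧
      (∀ i j, C (x i) = C (y j)) ∧
      Function.Injective x ∧ Function.Injective y ∧
      (∑ i, (x i : ℕ)) = ∏ j, (y j : ℕ) := by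
  intro r C
  obtain ⟨q, hqGam, hqidem⟩ := exists_mul_idem_in_Gam n (by omega)
  have hnp : ∀ a : ℕ+, q ≠ pure a := mul_idem_ne_pure hn hqGam hqidem
  -- find the color class belonging to `q`
  obtain ⟨i₀, -, hi₀⟩ :=
    Ultrafilter.eq_pure_of_finite_mem (Set.finite_univ (α := Fin r))
      (univ_mem (f := (q.map C : Filter (Fin r))))
  have hA : C ⁻¹' {i₀} ∈ q := by
    have h1 : ({i₀} : Set (Fin r)) ∈ q.map C := by
      rw [hi₀]
      exact Ultrafilter.mem_pure.mpr rfl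
    exact Ultrafilter.mem_map.mp h1
  set A : Set ℕ+ := C ⁻¹' {i₀} with hAdef
  have hD : A ∩ sumN n A ∈ q := inter_mem hA (hqGam _ hA)
  obtain ⟨k', rfl⟩ : ∃ k', k = k' + 1 := ⟨k - 1, by omega⟩
  obtain ⟨y, yinj, ymem, -, yprod⟩ := tower hqidem hnp k' _ hD 1
  obtain ⟨x, xinj, xmem, xsum⟩ := yprod.2
  refine ⟨x, y, ?_, ?_, xinj, yinj, ?_⟩
  · intro i j
    have h1 : C (x i) = i₀ := xmem i
    have h2 : C (x j) = i₀ := xmem j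
    rw [h1, h2]
  · intro i j
    have h1 : C (x i) = i₀ := xmem i
    have h2 : C (y j) = i₀ := (ymem j).1
    rw [h1, h2]
  · rw [← xsum]
    exact map_prod PNat.coeMonoidHom y Finset.univ
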